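/- Define the Motzkin numbers M : ℕ → ℕ by M(0) = 1, M(1) = 1, and M(n+2) = M(n+1) + ∑_{k=0}^{n} M(k)·M(n−k) (so M(2)=2, M(3)=4, M(4)=9, M(5)=21, M(6)=51, …). Then for every n ≥ 2, (n+2)·M(n) = (2n+1)·M(n−1) + 3·(n−1)·M(n−2); i.e., the Motzkin numbers, whose generating function is (1 − z − √(1 − 2z − 3z²))/(2z²), are P-recursive with the stated two-term recurrence. -/

import Mathlib

open PowerSeries

/-- The Motzkin numbers, defined by `M(0) = M(1) = 1` and
`M(n+2) = M(n+1) + ∑_{k≤n} M(k)·M(n-k)`, satisfy the two-term P-recurrence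
`(n+2)·M(n) = (2n+1)·M(n-1) + 3·(n-1)·M(n-2)` for `n ≥ 2`. -/
theorem stmt16 (M : ℕ → ℕ) (h0 : M 0 = 1) (h1 : M 1 = 1)
    (hM : ∀ n : ℕ, M (n + 2) = M (n + 1) + ∑ k ∈ Finset.range (n + 1), M k * M (n - k)) :
    ∀ n : ℕ, 2 ≤ n → (n + 2) * M n = (2 * n + 1) * M (n - 1) + 3 * (n - 1) * M (n - 2) := by
  set S : ℚ⟦X⟧ := PowerSeries.mk (fun n => (M n : ℚ)) with hS
  -- the generating function satisfies the quadratic equation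
  have hQ : X ^ 2 * S ^ 2 + (X - 1) * S + 1 = 0 := by
    ext n
    match n with
    | 0 => simp [hS, h0]
    | 1 =>
      simp [coeff_one, pow_two, coeff_mul, Finset.Nat.sum_antidiagonal_eq_sum_range_succ_mk,
        sub_mul, coeff_X, Finset.sum_range_succ, hS, h0, h1]
    | (m+2) =>
      have h3 : ((coeff (m+2)) (X ^ 2 * S ^ 2)) = coeff m (S^2) := by
        simpa using coeff_X_pow_mul (S^2) 2 m
      rw [map_add, map_add, h3]
      have h2 : ((coeff (m+2)) ((X - 1) * S)) = coeff (m+1) S - coeff (m+2) S := by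
        rw [sub_mul, map_sub, one_mul]
        congr 1
        simpa using coeff_X_pow_mul S 1 (m+1)
      rw [h2]
      simp only [pow_two, coeff_mul, Finset.Nat.sum_antidiagonal_eq_sum_range_succ_mk, hS,
        coeff_mk, coeff_one, map_zero]
      rw [hM m]
      push_cast
      ring
  -- differentiate the quadratic equation
  have hA : (2*X^2*S + X - 1) * (d⁄dX ℚ S) = -(2*X*S^2 + S) := by
    have hQ' := congrArg (d⁄dX ℚ) hQ
    simp only [map_add, Derivation.leibniz, Derivation.leibniz_pow, derivative_X,
      map_sub, Derivation.map_one_eq_zero, map_zero, smul_eq_mul, map_one] at hQ'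
    linear_combination hQ'
  -- the linear ODE for the generating function
  have hODE : X*(1-2*X-3*X^2)*(d⁄dX ℚ S) = (3*X+3*X^2-2)*S + 2 := by
    have hkey : (2*X^2*S + X - 1) *
        (X*(1-2*X-3*X^2)*(d⁄dX ℚ S) - ((3*X+3*X^2-2)*S + 2)) = 0 := by
      linear_combination (X*(1-2*X-3*X^2)) * hA + 2*(1-X)*hQ
    rcases mul_eq_zero.mp hkey with h | h
    · exfalso
      have := congrArg (constantCoeff) h
      simp at this
    · exact sub_eq_zero.mp h
  have hODE' : X*(d⁄dX ℚ S) - 2*(X^2*(d⁄dX ℚ S)) - 3*(X^3*(d⁄dX ℚ S))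
      = 3*(X*S) + 3*(X^2*S) - 2*S + 2 := by linear_combination hODE
  -- extract coefficients
  intro n hn
  match n, hn with
  | 2, _ =>
    have e2 := hM 0
    simp [h0, h1] at e2
    simp [e2, h0, h1]
  | (m+3), _ =>
    have hc := congrArg (coeff (m+3)) hODE'
    have c1 : (coeff (m+3)) (X * (d⁄dX ℚ S)) = (M (m+3) : ℚ) * (m+3) := by
      have := coeff_X_pow_mul (d⁄dX ℚ S) 1 (m+2)
      simp only [pow_one] at this
      rw [show m+3 = m+2+1 from rfl, this, coeff_derivative, hS, coeff_mk]
      push_cast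
      all_goals ring
    have c2 : (coeff (m+3)) (X^2 * (d⁄dX ℚ S)) = (M (m+2) : ℚ) * (m+2) := by
      rw [show m+3 = m+1+2 from rfl, coeff_X_pow_mul, coeff_derivative, hS, coeff_mk]
      push_cast
      all_goals ring
    have c3 : (coeff (m+3)) (X^3 * (d⁄dX ℚ S)) = (M (m+1) : ℚ) * (m+1) := by
      rw [coeff_X_pow_mul (d⁄dX ℚ S) 3 m, coeff_derivative, hS, coeff_mk]
    have c4 : (coeff (m+3)) (X * S) = (M (m+2) : ℚ) := by
      have := coeff_X_pow_mul S 1 (m+2)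
      simp only [pow_one] at this
      rw [show m+3 = m+2+1 from rfl, this, hS, coeff_mk]
    have c5 : (coeff (m+3)) (X^2 * S) = (M (m+1) : ℚ) := by
      rw [show m+3 = m+1+2 from rfl, coeff_X_pow_mul, hS, coeff_mk]
    have c6 : (coeff (m+3)) S = (M (m+3) : ℚ) := by rw [hS, coeff_mk]
    simp only [show (2:ℚ⟦X⟧) = C 2 from (map_ofNat C 2).symm,
      show (3:ℚ⟦X⟧) = C 3 from (map_ofNat C 3).symm, map_sub, map_add, coeff_C_mul,
      coeff_C, c1, c2, c3, c4, c5, c6] at hc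
    norm_num at hc
    have key : ((m:ℚ)+3+2) * (M (m+3) : ℚ)
        = (2*((m:ℚ)+3)+1) * (M (m+2) : ℚ) + 3*((m:ℚ)+2) * (M (m+1) : ℚ) := by
      linear_combination hc
    have hfin : (m+3+2) * M (m+3) = (2*(m+3)+1) * M (m+2) + 3*(m+2) * M (m+1) := by
      exact_mod_cast key
    simpa [show m+3-1 = m+2 from rfl, show m+3-2 = m+1 from rfl] using hfin
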